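/- Let p > 1 and α := 1/p ∈ (0,1). Let g_p : [0,1/2] → [0,1], g_p(x) = x + 2^p x^{p+1}, with inverse g_p^{-1}. Let h_0 : [0,1] → (0,∞) be continuous and define ρ(x) := h_0(x) · x / (x − g_p^{-1}(x)) for x ∈ (0,1], I(η) := ∫_η^1 dx / (x − g_p^{-1}(x)) for η ∈ (0,1], and γ(s) := ( 2(1−α) / (h_0(0) Γ(1+α) Γ(2−α) α^α) )^{1/α} · s^{1/α} for s > 0. Then for every sequence (η_n) in (0,1] with η_n → 0, lim_{n→∞} I(η_n) · γ( ∫_{g_p^{-1}(η_n)}^{η_n} ρ(x) dx ) = ( Γ(1+α) Γ(1−α) )^{−1/α}. -/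

import Mathlib

open Filter Set MeasureTheory

/-- The first (left) branch of the LSV map: `g_p(x) = x + 2^p x^(p+1)`. -/
noncomputable def lsvBranch (p : ℝ) (x : ℝ) : ℝ := x + 2 ^ p * x ^ (p + 1)

set_option maxHeartbeats 2000000 in
theorem stmt10 (p : ℝ) (hp : 1 < p) (α : ℝ) (hα : α = 1 / p)
    (ginv : ℝ → ℝ)
    (hginv : ∀ x ∈ Icc (0 : ℝ) 1, ginv x ∈ Icc (0 : ℝ) (1 / 2) ∧ lsvBranch p (ginv x) = x)
    (h0 : ℝ → ℝ) (h0cont : ContinuousOn h0 (Icc 0 1))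
    (h0pos : ∀ x ∈ Icc (0 : ℝ) 1, 0 < h0 x)
    (ρ : ℝ → ℝ) (hρ : ∀ x, ρ x = h0 x * x / (x - ginv x))
    (I : ℝ → ℝ) (hI : ∀ η, I η = ∫ x in η..1, 1 / (x - ginv x))
    (γ : ℝ → ℝ)
    (hγ : ∀ s, 0 < s →
      γ s = (2 * (1 - α) / (h0 0 * Real.Gamma (1 + α) * Real.Gamma (2 - α) * α ^ α)) ^ (1 / α)
        * s ^ (1 / α))
    (η : ℕ → ℝ) (hη_mem : ∀ n, η n ∈ Ioc (0 : ℝ) 1) (hη : Tendsto η atTop (nhds 0)) :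
    Tendsto (fun n => I (η n) * γ (∫ x in (ginv (η n))..(η n), ρ x)) atTop
      (nhds ((Real.Gamma (1 + α) * Real.Gamma (1 - α)) ^ (-(1 / α)))) := by
  have hp0 : (0:ℝ) < p := by linarith
  have hp1 : (0:ℝ) < p + 1 := by linarith
  have h2p : (0:ℝ) < 2 ^ p := Real.rpow_pos_of_pos two_pos p
  have hα0 : 0 < α := by rw [hα]; positivity
  have hα1 : α < 1 := by rw [hα]; rw [div_lt_one hp0]; linarith
  have hinvα : 1 / α = p := by rw [hα, one_div_one_div]
  have hh00 : 0 < h0 0 := h0pos 0 ⟨le_rfl, zero_le_one⟩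
  -- ### basic facts about g = lsvBranch p
  have hgmono : StrictMonoOn (lsvBranch p) (Ici 0) := by
    intro x hx y hy hxy
    unfold lsvBranch
    have : x ^ (p+1) ≤ y ^ (p+1) := Real.rpow_le_rpow hx hxy.le hp1.le
    nlinarith [h2p]
  have hg0 : lsvBranch p 0 = 0 := by
    unfold lsvBranch; rw [Real.zero_rpow (by linarith)]; ring
  have hghalf : lsvBranch p (1/2) = 1 := by
    unfold lsvBranch
    have h : ((1:ℝ)/2) ^ (p+1) = 2 ^ (-(p+1)) := by
      rw [one_div, ← Real.rpow_neg_one (2:ℝ), ← Real.rpow_mul (by norm_num), neg_one_mul]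
    rw [h, ← Real.rpow_add two_pos]
    norm_num
  have hgmem : ∀ y ∈ Icc (0:ℝ) (1/2), lsvBranch p y ∈ Icc (0:ℝ) 1 := by
    intro y hy
    constructor
    · have : (0:ℝ) ≤ 2 ^ p * y ^ (p+1) := mul_nonneg h2p.le (Real.rpow_nonneg hy.1 _)
      have := hy.1; unfold lsvBranch; linarith
    · calc lsvBranch p y ≤ lsvBranch p (1/2) := by
            rcases eq_or_lt_of_le hy.2 with h | h
            · rw [h]
            · exact (hgmono hy.1 (by norm_num) h).le
        _ = 1 := hghalf
  have hgid : ∀ y ∈ Icc (0:ℝ) (1/2), ginv (lsvBranch p y) = y := by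
    intro y hy
    have hmem := hgmem y hy
    obtain ⟨h1, h2⟩ := hginv _ hmem
    exact hgmono.injOn (Icc_subset_Ici_self h1)
      (Icc_subset_Ici_self hy) h2
  have hginv0 : ginv 0 = 0 := by
    have := hgid 0 ⟨le_rfl, by norm_num⟩
    rwa [hg0] at this
  have hginv1 : ginv 1 = 1/2 := by
    have := hgid (1/2) ⟨by norm_num, le_rfl⟩
    rwa [hghalf] at this
  have hginvmono : ∀ x ∈ Icc (0:ℝ) 1, ∀ y ∈ Icc (0:ℝ) 1, x ≤ y → ginv x ≤ ginv y := by
    intro x hx y hy hxy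
    by_contra hlt
    push_neg at hlt
    have := hgmono (Icc_subset_Ici_self (hginv y hy).1)
      (Icc_subset_Ici_self (hginv x hx).1) hlt
    rw [(hginv x hx).2, (hginv y hy).2] at this
    linarith
  have hginvpos : ∀ x ∈ Ioc (0:ℝ) 1, 0 < ginv x := by
    intro x hx
    rcases (hginv x ⟨hx.1.le, hx.2⟩).1.1.lt_or_eq with h | h
    · exact h
    · exfalso
      have := (hginv x ⟨hx.1.le, hx.2⟩).2
      rw [← h, hg0] at this
      exact hx.1.ne this
  -- continuity of g and ginv
  have hgcont : ContinuousOn (lsvBranch p) (Icc 0 (1/2)) := by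
    unfold lsvBranch
    refine (continuousOn_id).add (continuousOn_const.mul ?_)
    intro x hx
    exact (Real.continuousAt_rpow_const x (p+1) (Or.inr hp1.le)).continuousWithinAt
  have hginvcont : ContinuousOn ginv (Icc 0 1) := by
    let G : Icc (0:ℝ) (1/2) → Icc (0:ℝ) 1 := fun y => ⟨lsvBranch p y, hgmem y y.2⟩
    have hGc : Continuous G := Continuous.subtype_mk hgcont.restrict _
    have hGbij : Function.Bijective G := by
      constructor
      · intro a b hab
        have : lsvBranch p a = lsvBranch p b := congrArg Subtype.val hab
        exact Subtype.ext (hgmono.injOn (Icc_subset_Ici_self a.2) (Icc_subset_Ici_self b.2) this)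
      · intro x
        exact ⟨⟨ginv x, (hginv x x.2).1⟩, Subtype.ext (hginv x x.2).2⟩
    let E : Icc (0:ℝ) (1/2) ≃ Icc (0:ℝ) 1 := Equiv.ofBijective G hGbij
    have hEc : Continuous (E : Icc (0:ℝ) (1/2) → Icc (0:ℝ) 1) := hGc
    let H := Continuous.homeoOfEquivCompactToT2 (f := E) hEc
    have hsymm : Continuous (fun x : Icc (0:ℝ) 1 => ((H.symm x : Icc (0:ℝ) (1/2)) : ℝ)) :=
      continuous_subtype_val.comp H.symm.continuous
    have heq : ∀ x : Icc (0:ℝ) 1, ((H.symm x : Icc (0:ℝ) (1/2)) : ℝ) = ginv x := by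
      intro x
      have hx : E (H.symm x) = x := H.apply_symm_apply x
      have h2 : lsvBranch p ((H.symm x : Icc (0:ℝ) (1/2)) : ℝ) = (x:ℝ) := congrArg Subtype.val hx
      have h3 := hgid _ (H.symm x).2
      rw [h2] at h3
      exact h3.symm
    rw [continuousOn_iff_continuous_restrict]
    exact hsymm.congr fun x => (heq x)
  -- key identity
  have hkey : ∀ x ∈ Icc (0:ℝ) 1, x - ginv x = 2 ^ p * (ginv x) ^ (p+1) := by
    intro x hx
    have := (hginv x hx).2
    unfold lsvBranch at this
    linarith
  -- ### sequences u and w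
  set u : ℕ → ℝ := fun n => ginv (η n) with hu_def
  set w : ℕ → ℝ := fun n => ginv (u n) with hw_def
  have hη_mem' : ∀ n, η n ∈ Icc (0:ℝ) 1 := fun n => ⟨(hη_mem n).1.le, (hη_mem n).2⟩
  have hu_mem : ∀ n, u n ∈ Icc (0:ℝ) (1/2) := fun n => (hginv _ (hη_mem' n)).1
  have hu_mem' : ∀ n, u n ∈ Icc (0:ℝ) 1 := fun n => ⟨(hu_mem n).1, le_trans (hu_mem n).2 (by norm_num)⟩
  have hu_pos : ∀ n, 0 < u n := fun n => hginvpos _ (hη_mem n)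
  have hgu : ∀ n, lsvBranch p (u n) = η n := fun n => (hginv _ (hη_mem' n)).2
  have hw_pos : ∀ n, 0 < w n := fun n => hginvpos _ ⟨hu_pos n, (hu_mem' n).2⟩
  have hgw : ∀ n, lsvBranch p (w n) = u n := fun n => (hginv _ (hu_mem' n)).2
  have hu_le_η : ∀ n, u n ≤ η n := by
    intro n
    have := hkey (η n) (hη_mem' n)
    have h2 : (0:ℝ) ≤ 2 ^ p * (ginv (η n)) ^ (p+1) :=
      mul_nonneg h2p.le (Real.rpow_nonneg (hu_mem n).1 _)
    simp only [hu_def]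
    linarith
  have hw_le_u : ∀ n, w n ≤ u n := by
    intro n
    have := hkey (u n) (hu_mem' n)
    have h2 : (0:ℝ) ≤ 2 ^ p * (ginv (u n)) ^ (p+1) :=
      mul_nonneg h2p.le (Real.rpow_nonneg (hginv _ (hu_mem' n)).1.1 _)
    simp only [hw_def]
    linarith
  -- u → 0 and w → 0
  have hginv_at0 : ContinuousWithinAt ginv (Icc 0 1) 0 :=
    hginvcont 0 ⟨le_rfl, zero_le_one⟩
  have hη_in : Tendsto η atTop (nhdsWithin 0 (Icc (0:ℝ) 1)) := by
    rw [tendsto_nhdsWithin_iff]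
    exact ⟨hη, Eventually.of_forall hη_mem'⟩
  have hu_tendsto : Tendsto u atTop (nhds 0) := by
    have := hginv_at0.tendsto.comp hη_in
    rwa [hginv0] at this
  have hw_tendsto : Tendsto w atTop (nhds 0) := by
    have hu_in : Tendsto u atTop (nhdsWithin 0 (Icc (0:ℝ) 1)) := by
      rw [tendsto_nhdsWithin_iff]
      exact ⟨hu_tendsto, Eventually.of_forall hu_mem'⟩
    have := hginv_at0.tendsto.comp hu_in
    rwa [hginv0] at this
  have hu_gt : Tendsto u atTop (nhdsWithin 0 (Ioi (0:ℝ))) := by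
    rw [tendsto_nhdsWithin_iff]
    exact ⟨hu_tendsto, Eventually.of_forall hu_pos⟩
  have hw_gt : Tendsto w atTop (nhdsWithin 0 (Ioi (0:ℝ))) := by
    rw [tendsto_nhdsWithin_iff]
    exact ⟨hw_tendsto, Eventually.of_forall hw_pos⟩
  have hrpow0 : ContinuousAt (fun x : ℝ => x ^ p) 0 :=
    Real.continuousAt_rpow_const 0 p (Or.inr hp0.le)
  have hup_tendsto : Tendsto (fun n => u n ^ p) atTop (nhds 0) := by
    have := hrpow0.tendsto.comp hu_tendsto
    rwa [Real.zero_rpow hp0.ne'] at this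
  have hwp_tendsto : Tendsto (fun n => w n ^ p) atTop (nhds 0) := by
    have := hrpow0.tendsto.comp hw_tendsto
    rwa [Real.zero_rpow hp0.ne'] at this
  -- ### exact formula for I
  set φ : ℝ → ℝ := fun t => (p+1) * Real.log t - 2 ^ (-p) / p * t ^ (-p) with hφ_def
  set ψ : ℝ → ℝ := fun t => (p+1) / t + 2 ^ (-p) * t ^ (-p-1) with hψ_def
  have hφd : ∀ t : ℝ, 0 < t → HasDerivAt φ (ψ t) t := by
    intro t ht
    have h1 : HasDerivAt (fun t : ℝ => Real.log t) t⁻¹ t := Real.hasDerivAt_log ht.ne'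
    have h2 : HasDerivAt (fun t : ℝ => t ^ (-p)) (-p * t ^ (-p-1)) t := by
      simpa using Real.hasDerivAt_rpow_const (x := t) (p := -p) (Or.inl ht.ne')
    have h3 := (h1.const_mul (p+1)).sub (h2.const_mul (2 ^ (-p) / p))
    convert h3 using 1
    show (p+1) / t + 2 ^ (-p) * t ^ (-p-1) = _
    field_simp
    ring
    all_goals rfl
  have hgd : ∀ t : ℝ, HasDerivAt (lsvBranch p) (1 + 2 ^ p * ((p+1) * t ^ p)) t := by
    intro t
    have h2 : HasDerivAt (fun x : ℝ => x ^ (p+1)) ((p+1) * t ^ p) t := by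
      simpa [add_sub_cancel_right] using
        Real.hasDerivAt_rpow_const (x := t) (p := p+1) (Or.inr (by linarith))
    exact (hasDerivAt_id t).add (h2.const_mul (2 ^ p : ℝ))
  have hIformula : ∀ n, I (η n) = φ (1/2) - φ (u n) := by
    intro n
    have hu2 : u n ≤ 1/2 := (hu_mem n).2
    have hupos := hu_pos n
    have hηpos := (hη_mem n).1
    set F : ℝ → ℝ := fun x => 1 / (x - ginv x) with hF_def
    have hFc : ContinuousOn F (Icc (η n) 1) := by
      have hsub : Icc (η n) 1 ⊆ Icc (0:ℝ) 1 := Icc_subset_Icc hηpos.le le_rfl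
      refine ContinuousOn.div continuousOn_const
        (continuousOn_id.sub (hginvcont.mono hsub)) ?_
      intro x hx
      have hx' : x ∈ Ioc (0:ℝ) 1 := ⟨lt_of_lt_of_le hηpos hx.1, hx.2⟩
      have hk := hkey x (hsub hx)
      have h2 : 0 < 2 ^ p * (ginv x) ^ (p+1) :=
        mul_pos h2p (Real.rpow_pos_of_pos (hginvpos x hx') _)
      intro h; rw [h] at hk; linarith
    have himg : lsvBranch p '' (uIcc (u n) (1/2)) ⊆ Icc (η n) 1 := by
      rw [uIcc_of_le hu2]
      rintro x ⟨t, ht, rfl⟩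
      constructor
      · rw [← hgu n]
        exact hgmono.monotoneOn (hu_mem n).1 (le_trans (hu_mem n).1 ht.1) ht.1
      · rw [← hghalf]
        exact hgmono.monotoneOn (le_trans (hu_mem n).1 ht.1) (by norm_num) ht.2
    have hf'c : ContinuousOn (fun t : ℝ => 1 + 2 ^ p * ((p+1) * t ^ p)) (uIcc (u n) (1/2)) := by
      refine continuousOn_const.add (continuousOn_const.mul (continuousOn_const.mul ?_))
      intro t ht
      rw [uIcc_of_le hu2] at ht
      exact (Real.continuousAt_rpow_const t p (Or.inl (by linarith [ht.1]))).continuousWithinAt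
    have hsubst := intervalIntegral.integral_comp_smul_deriv'
      (f := lsvBranch p) (f' := fun t => 1 + 2 ^ p * ((p+1) * t ^ p)) (g := F)
      (a := u n) (b := 1/2)
      (fun t _ => hgd t) hf'c (hFc.mono himg)
    have heqn : ∀ t ∈ uIcc (u n) (1/2),
        (1 + 2 ^ p * ((p+1) * t ^ p)) • F (lsvBranch p t) = ψ t := by
      intro t ht
      rw [uIcc_of_le hu2] at ht
      have htpos : 0 < t := lt_of_lt_of_le hupos ht.1
      have hid : ginv (lsvBranch p t) = t := hgid t ⟨htpos.le, ht.2⟩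
      have hA : (0:ℝ) < t ^ p := Real.rpow_pos_of_pos htpos p
      have ht1 : t ^ (p+1) = t ^ p * t := by
        rw [Real.rpow_add htpos, Real.rpow_one]
      have ht2 : t ^ (-p-1) = (t ^ p * t)⁻¹ := by
        rw [show -p-1 = -(p+1) by ring, Real.rpow_neg htpos.le, ht1]
      have h2p' : (2:ℝ) ^ (-p) = (2 ^ p)⁻¹ := Real.rpow_neg (by norm_num) p
      have hid2 : ginv (t + 2 ^ p * (t ^ p * t)) = t := by rw [← ht1]; exact hid
      simp only [hψ_def, hF_def, smul_eq_mul, lsvBranch, ht1, ht2, h2p', hid2]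
      have h3 : t + 2 ^ p * (t ^ p * t) - t = 2 ^ p * (t ^ p * t) := by ring
      rw [h3]
      field_simp
      ring
    have hsubst' : (∫ x in (u n)..(1/2), (fun t => 1 + 2 ^ p * ((p+1) * t ^ p)) x • (F ∘ lsvBranch p) x)
        = ∫ x in (η n)..1, F x := by rw [hsubst, hgu n, hghalf]
    rw [hI, ← hsubst']
    apply intervalIntegral.integral_eq_sub_of_hasDerivAt
    · intro t ht
      have ht' := ht
      rw [uIcc_of_le hu2] at ht'
      have htpos : 0 < t := lt_of_lt_of_le hupos ht'.1
      exact (heqn t ht).symm ▸ hφd t htpos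
    · refine ContinuousOn.intervalIntegrable ?_
      refine ContinuousOn.smul hf'c ?_
      refine (hFc.mono himg).comp ?_ (mapsTo_image _ _)
      refine hgcont.mono ?_
      rw [uIcc_of_le hu2]
      exact Icc_subset_Icc (hu_mem n).1 le_rfl
  -- ### limit T1
  have hT1 : Tendsto (fun n => (φ (1/2) - φ (u n)) * u n ^ p) atTop (nhds (2 ^ (-p) / p)) := by
    have hlogmul : Tendsto (fun n => Real.log (u n) * u n ^ p) atTop (nhds 0) :=
      (tendsto_log_mul_rpow_nhdsGT_zero hp0).comp hu_gt
    have heq : ∀ n, (φ (1/2) - φ (u n)) * u n ^ p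
        = φ (1/2) * u n ^ p - (p+1) * (Real.log (u n) * u n ^ p) + 2 ^ (-p) / p := by
      intro n
      have hupos := hu_pos n
      have h1 : (u n) ^ (-p) * (u n) ^ p = 1 := by
        rw [← Real.rpow_add hupos]; simp
      have h2 : (φ (1/2) - φ (u n)) * u n ^ p
          = φ (1/2) * u n ^ p - (p+1) * (Real.log (u n) * u n ^ p)
            + 2 ^ (-p) / p * ((u n) ^ (-p) * (u n) ^ p) := by
        simp only [hφ_def]; ring
      rw [h2, h1, mul_one]
    have hlim : Tendsto (fun n => φ (1/2) * u n ^ p - (p+1) * (Real.log (u n) * u n ^ p)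
        + 2 ^ (-p) / p) atTop (nhds (2 ^ (-p) / p)) := by
      have := ((hup_tendsto.const_mul (φ (1/2))).sub (hlogmul.const_mul (p+1))).add
        (tendsto_const_nhds (x := (2:ℝ) ^ (-p) / p))
      simpa using this
    exact hlim.congr (fun n => (heq n).symm)
  -- ### the integral J and its bounds
  set J : ℕ → ℝ := fun n => ∫ x in (u n)..(η n), ρ x with hJ_def
  have hρ_cont : ∀ n, ContinuousOn ρ (Icc (u n) (η n)) := by
    intro n
    have hsub : Icc (u n) (η n) ⊆ Icc (0:ℝ) 1 :=
      Icc_subset_Icc (hu_pos n).le (hη_mem n).2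
    have : ContinuousOn (fun x => h0 x * x / (x - ginv x)) (Icc (u n) (η n)) := by
      refine ContinuousOn.div (((h0cont.mono hsub).mul continuousOn_id)) 
        (continuousOn_id.sub (hginvcont.mono hsub)) ?_
      intro x hx
      have hx' : x ∈ Ioc (0:ℝ) 1 := ⟨lt_of_lt_of_le (hu_pos n) hx.1, (hsub hx).2⟩
      have hk := hkey x (hsub hx)
      have h2 : 0 < 2 ^ p * (ginv x) ^ (p+1) :=
        mul_pos h2p (Real.rpow_pos_of_pos (hginvpos x hx') _)
      intro h; rw [h] at hk; linarith
    exact this.congr (fun x _ => hρ x)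
  have hρ_int : ∀ n, IntervalIntegrable ρ volume (u n) (η n) := by
    intro n
    apply ContinuousOn.intervalIntegrable
    rw [uIcc_of_le (hu_le_η n)]
    exact hρ_cont n
  -- bounds on ρ over [u n, η n] under an h0-oscillation hypothesis
  have hbounds : ∀ ε' : ℝ, 0 < ε' → ε' ≤ h0 0 →
      ∀ n, (∀ y ∈ Icc (0:ℝ) (η n), |h0 y - h0 0| ≤ ε') →
      (h0 0 - ε') * u n ≤ J n ∧ J n ≤ (h0 0 + ε') * (η n * (u n ^ (p+1) / w n ^ (p+1))) := by
    intro ε' hε' hε'le n hosc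
    have hupos := hu_pos n
    have hwpos := hw_pos n
    have hηpos := (hη_mem n).1
    have huη := hu_le_η n
    have hsub : Icc (u n) (η n) ⊆ Icc (0:ℝ) 1 :=
      Icc_subset_Icc hupos.le (hη_mem n).2
    have hgap : η n - u n = 2 ^ p * u n ^ (p+1) := by
      have := hkey (η n) (hη_mem' n); simpa using this
    have hc1 : ∀ x ∈ Icc (u n) (η n),
        (h0 0 - ε') * u n / (2 ^ p * u n ^ (p+1)) ≤ ρ x := by
      intro x hx
      have hx' : x ∈ Ioc (0:ℝ) 1 := ⟨lt_of_lt_of_le hupos hx.1, (hsub hx).2⟩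
      have hk := hkey x (hsub hx)
      have hosc' := hosc x ⟨(hsub hx).1, hx.2⟩
      have hh0 : h0 0 - ε' ≤ h0 x := by
        have := abs_le.mp hosc'; linarith [this.1]
      have hgx_le : ginv x ≤ u n := hginvmono x (hsub hx) (η n) (hη_mem' n) hx.2
      have hgx_pos : 0 < ginv x := hginvpos x hx'
      have hdenle : 2 ^ p * (ginv x) ^ (p+1) ≤ 2 ^ p * u n ^ (p+1) :=
        mul_le_mul_of_nonneg_left (Real.rpow_le_rpow hgx_pos.le hgx_le hp1.le) h2p.le
      have hdenpos : 0 < 2 ^ p * (ginv x) ^ (p+1) :=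
        mul_pos h2p (Real.rpow_pos_of_pos hgx_pos _)
      have hnum : (h0 0 - ε') * u n ≤ h0 x * x :=
        mul_le_mul hh0 hx.1 hupos.le (le_trans (by linarith) hh0)
      rw [hρ x, hk]
      exact div_le_div₀ (mul_nonneg (le_trans (by linarith) hh0) (le_trans hupos.le hx.1))
        hnum hdenpos hdenle
    have hc2 : ∀ x ∈ Icc (u n) (η n),
        ρ x ≤ (h0 0 + ε') * η n / (2 ^ p * w n ^ (p+1)) := by
      intro x hx
      have hx' : x ∈ Ioc (0:ℝ) 1 := ⟨lt_of_lt_of_le hupos hx.1, (hsub hx).2⟩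
      have hk := hkey x (hsub hx)
      have hosc' := hosc x ⟨(hsub hx).1, hx.2⟩
      have hh0 : h0 x ≤ h0 0 + ε' := by
        have := abs_le.mp hosc'; linarith [this.2]
      have hgx_ge : w n ≤ ginv x := hginvmono (u n) (hu_mem' n) x (hsub hx) hx.1
      have hdenge : 2 ^ p * w n ^ (p+1) ≤ 2 ^ p * (ginv x) ^ (p+1) :=
        mul_le_mul_of_nonneg_left (Real.rpow_le_rpow hwpos.le hgx_ge hp1.le) h2p.le
      have hdenpos : 0 < 2 ^ p * w n ^ (p+1) :=
        mul_pos h2p (Real.rpow_pos_of_pos hwpos _)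
      have hnum : h0 x * x ≤ (h0 0 + ε') * η n := by
        apply mul_le_mul hh0 hx.2 (le_trans hupos.le hx.1) (by linarith)
      rw [hρ x, hk]
      exact div_le_div₀ (mul_nonneg (by linarith) hηpos.le) hnum hdenpos hdenge
    constructor
    · have := intervalIntegral.integral_mono_on huη
        (intervalIntegrable_const (c := (h0 0 - ε') * u n / (2 ^ p * u n ^ (p+1))))
        (hρ_int n) hc1
      rw [intervalIntegral.integral_const, smul_eq_mul, hgap] at this
      calc (h0 0 - ε') * u n
          = 2 ^ p * u n ^ (p+1) * ((h0 0 - ε') * u n / (2 ^ p * u n ^ (p+1))) := by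
            field_simp
        _ ≤ J n := this
    · have := intervalIntegral.integral_mono_on huη (hρ_int n)
        (intervalIntegrable_const (c := (h0 0 + ε') * η n / (2 ^ p * w n ^ (p+1))))
        hc2
      rw [intervalIntegral.integral_const, smul_eq_mul, hgap] at this
      calc J n ≤ 2 ^ p * u n ^ (p+1) * ((h0 0 + ε') * η n / (2 ^ p * w n ^ (p+1))) := this
        _ = (h0 0 + ε') * (η n * (u n ^ (p+1) / w n ^ (p+1))) := by
            have : (0:ℝ) < w n ^ (p+1) := Real.rpow_pos_of_pos (hw_pos n) _
            field_simp
  -- ### oscillation control and J/u limit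
  have hosc_ev : ∀ ε' : ℝ, 0 < ε' →
      ∀ᶠ n in atTop, ∀ y ∈ Icc (0:ℝ) (η n), |h0 y - h0 0| ≤ ε' := by
    intro ε' hε'
    have hc0 : ContinuousWithinAt h0 (Icc 0 1) 0 := h0cont 0 ⟨le_rfl, zero_le_one⟩
    rw [Metric.continuousWithinAt_iff] at hc0
    obtain ⟨δ, hδ, hδ'⟩ := hc0 ε' hε'
    filter_upwards [hη.eventually_lt_const hδ] with n hn y hy
    have hy1 : y ∈ Icc (0:ℝ) 1 := ⟨hy.1, le_trans hy.2 (hη_mem n).2⟩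
    have hyd : dist y 0 < δ := by
      rw [Real.dist_eq, sub_zero, abs_of_nonneg hy.1]
      exact lt_of_le_of_lt hy.2 hn
    have := hδ' hy1 hyd
    rw [Real.dist_eq] at this
    exact this.le
  have hrpow1 : ContinuousAt (fun x : ℝ => x ^ (p+1)) 1 :=
    Real.continuousAt_rpow_const 1 (p+1) (Or.inl one_ne_zero)
  have hB : Tendsto (fun n => (η n / u n) * (u n ^ (p+1) / w n ^ (p+1))) atTop (nhds 1) := by
    have h1 : ∀ n, η n / u n = 1 + 2 ^ p * u n ^ p := by
      intro n
      have hupos := hu_pos n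
      have hgu' := hgu n
      unfold lsvBranch at hgu'
      have hu1 : u n ^ (p+1) = u n ^ p * u n := by
        rw [Real.rpow_add hupos, Real.rpow_one]
      rw [← hgu', hu1]
      field_simp
    have h2 : ∀ n, u n ^ (p+1) / w n ^ (p+1) = (1 + 2 ^ p * w n ^ p) ^ (p+1) := by
      intro n
      have hwpos := hw_pos n
      have hgw' := hgw n
      unfold lsvBranch at hgw'
      have hw1 : w n ^ (p+1) = w n ^ p * w n := by
        rw [Real.rpow_add hwpos, Real.rpow_one]
      rw [← Real.div_rpow (by linarith [hgw', mul_nonneg h2p.le (Real.rpow_nonneg hwpos.le (p+1))]) hwpos.le]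
      congr 1
      rw [← hgw', hw1]
      field_simp
    have hl1 : Tendsto (fun n => 1 + 2 ^ p * u n ^ p) atTop (nhds 1) := by
      have := (hup_tendsto.const_mul ((2:ℝ) ^ p)).const_add 1
      simpa using this
    have hl2 : Tendsto (fun n => (1 + 2 ^ p * w n ^ p) ^ (p+1)) atTop (nhds 1) := by
      have hin : Tendsto (fun n => 1 + 2 ^ p * w n ^ p) atTop (nhds 1) := by
        have := (hwp_tendsto.const_mul ((2:ℝ) ^ p)).const_add 1
        simpa using this
      have := hrpow1.tendsto.comp hin
      rwa [Real.one_rpow] at this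
    have := hl1.mul hl2
    rw [mul_one] at this
    refine this.congr fun n => ?_
    rw [h1 n, h2 n]
  have hJdiv : Tendsto (fun n => J n / u n) atTop (nhds (h0 0)) := by
    rw [tendsto_order]
    constructor
    · intro b hb
      have hε'pos : 0 < min ((h0 0 - b)/2) (h0 0) := lt_min (by linarith) hh00
      have hε'le : min ((h0 0 - b)/2) (h0 0) ≤ h0 0 := min_le_right _ _
      filter_upwards [hosc_ev _ hε'pos] with n hn
      have hlow := (hbounds _ hε'pos hε'le n hn).1
      have hupos := hu_pos n
      have hblt : b < h0 0 - min ((h0 0 - b)/2) (h0 0) := by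
        have := min_le_left ((h0 0 - b)/2) (h0 0)
        linarith
      exact lt_of_lt_of_le hblt ((le_div_iff₀ hupos).2 hlow)
    · intro b hb
      have hε'pos : 0 < min ((b - h0 0)/2) (h0 0) := lt_min (by linarith) hh00
      have hε'le : min ((b - h0 0)/2) (h0 0) ≤ h0 0 := min_le_right _ _
      have hlt : h0 0 + min ((b - h0 0)/2) (h0 0) < b := by
        have := min_le_left ((b - h0 0)/2) (h0 0)
        linarith
      have hev2 : ∀ᶠ n in atTop,
          (h0 0 + min ((b - h0 0)/2) (h0 0)) * ((η n / u n) * (u n ^ (p+1) / w n ^ (p+1))) < b := by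
        have := hB.const_mul (h0 0 + min ((b - h0 0)/2) (h0 0))
        rw [mul_one] at this
        exact this.eventually_lt_const hlt
      filter_upwards [hosc_ev _ hε'pos, hev2] with n hn hn2
      have hupp := (hbounds _ hε'pos hε'le n hn).2
      have hupos := hu_pos n
      calc J n / u n
          ≤ (h0 0 + min ((b - h0 0)/2) (h0 0)) * (η n * (u n ^ (p+1) / w n ^ (p+1))) / u n := by
            gcongr
        _ = (h0 0 + min ((b - h0 0)/2) (h0 0)) * ((η n / u n) * (u n ^ (p+1) / w n ^ (p+1))) := by
            field_simp
        _ < b := hn2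
  have hJpos : ∀ᶠ n in atTop, 0 < J n := by
    filter_upwards [hosc_ev (h0 0 / 2) (by linarith)] with n hn
    have hlow := (hbounds (h0 0 / 2) (by linarith) (by linarith) n hn).1
    exact lt_of_lt_of_le (mul_pos (by linarith : (0:ℝ) < h0 0 - h0 0 / 2) (hu_pos n)) hlow
  -- ### assembly
  have hΓa : 0 < Real.Gamma (1 + α) := Real.Gamma_pos_of_pos (by linarith)
  have hΓb : 0 < Real.Gamma (1 - α) := Real.Gamma_pos_of_pos (by linarith)
  have hΓc_eq : Real.Gamma (2 - α) = (1 - α) * Real.Gamma (1 - α) := by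
    have hne : (1:ℝ) - α ≠ 0 := by intro h; rw [sub_eq_zero] at h; linarith
    have h := Real.Gamma_add_one hne
    rw [show (2:ℝ) - α = (1 - α) + 1 by ring, h]
  have hαα : 0 < α ^ α := Real.rpow_pos_of_pos hα0 α
  set C : ℝ := 2 * (1 - α) / (h0 0 * Real.Gamma (1 + α) * Real.Gamma (2 - α) * α ^ α)
    with hC_def
  have hCpos : 0 < C := by
    rw [hC_def, hΓc_eq]
    apply div_pos (by linarith)
    have : 0 < (1 - α) * Real.Gamma (1 - α) := mul_pos (by linarith) hΓb
    positivity
  have hmain : ∀ᶠ n in atTop, I (η n) * γ (∫ x in (ginv (η n))..(η n), ρ x)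
      = ((φ (1/2) - φ (u n)) * u n ^ p) * (C ^ p * (J n / u n) ^ p) := by
    filter_upwards [hJpos] with n hn
    have hγn := hγ (J n) hn
    rw [hinvα] at hγn
    have hJn : (∫ x in (ginv (η n))..(η n), ρ x) = J n := rfl
    rw [hJn, hγn, hIformula n]
    have hJ_split : J n ^ p = u n ^ p * (J n / u n) ^ p := by
      rw [← Real.mul_rpow (hu_pos n).le (div_nonneg hn.le (hu_pos n).le),
        mul_div_cancel₀ _ (hu_pos n).ne']
    rw [hJ_split]
    ring
  have hT2 : Tendsto (fun n => C ^ p * (J n / u n) ^ p) atTop (nhds (C ^ p * (h0 0) ^ p)) := by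
    have hcont : ContinuousAt (fun x : ℝ => x ^ p) (h0 0) :=
      Real.continuousAt_rpow_const _ _ (Or.inl hh00.ne')
    exact (hcont.tendsto.comp hJdiv).const_mul _
  have hfinal := hT1.mul hT2
  have hval : (2 ^ (-p) / p) * (C ^ p * (h0 0) ^ p)
      = (Real.Gamma (1 + α) * Real.Gamma (1 - α)) ^ (-(1/α)) := by
    rw [hinvα]
    have hCh : C * h0 0 = 2 / (Real.Gamma (1 + α) * Real.Gamma (1 - α) * α ^ α) := by
      have h1a : (0:ℝ) < 1 - α := by linarith
      rw [hC_def, hΓc_eq]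
      field_simp [hh00.ne', hΓa.ne', hΓb.ne', hαα.ne', h1a.ne']
    have e1 : C ^ p * (h0 0) ^ p = (C * h0 0) ^ p := (Real.mul_rpow hCpos.le hh00.le).symm
    have hden : (0:ℝ) < Real.Gamma (1 + α) * Real.Gamma (1 - α) * α ^ α := by positivity
    have e2 : (2 / (Real.Gamma (1 + α) * Real.Gamma (1 - α) * α ^ α)) ^ p
        = 2 ^ p / ((Real.Gamma (1 + α) * Real.Gamma (1 - α)) ^ p * α) := by
      rw [Real.div_rpow (by norm_num) hden.le,
        Real.mul_rpow (by positivity) hαα.le]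
      congr 2
      rw [← Real.rpow_mul hα0.le, show α * p = 1 by rw [hα]; field_simp, Real.rpow_one]
    rw [e1, hCh, e2,
      Real.rpow_neg (by positivity : (0:ℝ) ≤ Real.Gamma (1 + α) * Real.Gamma (1 - α)),
      Real.rpow_neg (by norm_num : (0:ℝ) ≤ 2)]
    have hX : (0:ℝ) < (Real.Gamma (1 + α) * Real.Gamma (1 - α)) ^ p := by positivity
    have h2pne : ((2:ℝ) ^ p) ≠ 0 := h2p.ne'
    rw [hα]
    field_simp
  have htend : Tendsto (fun n => I (η n) * γ (∫ x in (ginv (η n))..(η n), ρ x)) atTop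
      (nhds ((2 ^ (-p) / p) * (C ^ p * (h0 0) ^ p))) :=
    Tendsto.congr' (hmain.mono fun n h => h.symm) hfinal
  rwa [hval] at htend
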